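/- Let N ≥ 1 and r ≥ 0 be integers, t_min > 0, β > 0, and D ≥ t_min. Let (T_{j,k}), for j = 1, ..., N and k = 1, ..., r+1, be mutually independent Pareto(t_min, β) random variables. Then P( max_{1≤j≤N} min_{1≤k≤r+1} T_{j,k} ≤ D ) = (1 − (t_min/D)^{β·(r+1)})^N. -/

import Mathlib

open MeasureTheory ProbabilityTheory Set
open scoped ENNReal

/-- A real random variable `X` is Pareto(`tmin`, `β`): `P(X > t) = (tmin/t)^β` for `t ≥ tmin`
and `P(X > t) = 1` for `t < tmin`. -/
def IsPareto {Ω : Type*} [MeasurableSpace Ω] (μ : Measure Ω) (X : Ω → ℝ)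
    (tmin β : ℝ) : Prop :=
  Measurable X ∧
    (∀ t : ℝ, tmin ≤ t → μ {ω | t < X ω} = ENNReal.ofReal ((tmin / t) ^ β)) ∧
    (∀ t : ℝ, t < tmin → μ {ω | t < X ω} = 1)

/-- paper's Theorem 1, PoCD of Clone: with `N` tasks, each with `r+1`
mutually independent Pareto(`tmin`, `β`) attempts, the probability that every task
has some attempt finishing by the deadline `D` is `(1 − (tmin/D)^{β(r+1)})^N`. -/
theorem pocd_clone
    {Ω : Type*} [MeasurableSpace Ω] (μ : Measure Ω) [IsProbabilityMeasure μ]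
    (N r : ℕ) (hN : 1 ≤ N) (tmin β D : ℝ)
    (htmin : 0 < tmin) (hβ : 0 < β) (hD : tmin ≤ D)
    (T : Fin N → Fin (r + 1) → Ω → ℝ)
    (hindep : iIndepFun
      (fun p : Fin N × Fin (r + 1) => T p.1 p.2) μ)
    (hpareto : ∀ j k, IsPareto μ (T j k) tmin β) :
    μ {ω | (⨆ j, ⨅ k, T j k ω) ≤ D}
      = ENNReal.ofReal ((1 - (tmin / D) ^ (β * (r + 1 : ℝ))) ^ N) := by
  classical
  haveI : NeZero N := ⟨Nat.one_le_iff_ne_zero.mp hN⟩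
  have hDpos : 0 < D := htmin.trans_le hD
  set x : ℝ := (tmin / D) ^ β with hxdef
  have hx0 : 0 ≤ x := Real.rpow_nonneg (by positivity) β
  have hx1 : x ≤ 1 :=
    Real.rpow_le_one (by positivity) (by rw [div_le_one hDpos]; exact hD) hβ.le
  have hmeas : ∀ j k, Measurable (T j k) := fun j k => (hpareto j k).1
  set a : ℝ≥0∞ := ENNReal.ofReal x with hadef
  have ha1 : a ≤ 1 := by
    rw [hadef]; exact ENNReal.ofReal_le_one.mpr hx1
  -- per-coordinate sets indexed by Bool
  set S : Bool → Set ℝ := fun b => if b then Set.Iic D else Set.Ioi D with hSdef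
  have hSmeas : ∀ b, MeasurableSet (S b) := by
    intro b; cases b <;> simp [hSdef, measurableSet_Iic, measurableSet_Ioi]
  set q : Bool → ℝ≥0∞ := fun b => if b then 1 - a else a with hqdef
  have hq : ∀ j k b, μ (T j k ⁻¹' S b) = q b := by
    intro j k b
    have hgt : μ (T j k ⁻¹' S false) = a := (hpareto j k).2.1 D hD
    cases b
    · exact hgt
    · have hc : T j k ⁻¹' S true = (T j k ⁻¹' S false)ᶜ := by
        ext ω; simp [hSdef, not_lt]
      rw [hc, measure_compl ((hmeas j k) (hSmeas false)) (measure_ne_top μ _), hgt,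
        measure_univ]
      rfl
  have hqsum : q true + q false = 1 := by
    simp only [hqdef, if_true, if_false]
    exact tsub_add_cancel_of_le ha1
  -- atoms
  set atom : (Fin N → Fin (r + 1) → Bool) → Set Ω := fun c =>
    ⋂ p : Fin N × Fin (r + 1), T p.1 p.2 ⁻¹' S (c p.1 p.2) with hatomdef
  have hatom_meas : ∀ c, MeasurableSet (atom c) := fun c =>
    MeasurableSet.iInter fun p => (hmeas p.1 p.2) (hSmeas _)
  have hatom_measure : ∀ c, μ (atom c) = ∏ j, ∏ k, q (c j k) := by
    intro c
    have := hindep.meas_iInter (s := fun p : Fin N × Fin (r + 1) =>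
        T p.1 p.2 ⁻¹' S (c p.1 p.2))
      (fun p => ⟨S (c p.1 p.2), hSmeas _, rfl⟩)
    rw [hatomdef]
    rw [this, Fintype.prod_prod_type]
    exact Finset.prod_congr rfl fun j _ => Finset.prod_congr rfl fun k _ => hq j k _
  -- the allowed patterns
  set G : Finset (Fin (r + 1) → Bool) := Finset.univ.filter (fun g => ∃ k, g k = true)
    with hGdef
  set A : Finset (Fin N → Fin (r + 1) → Bool) := Fintype.piFinset (fun _ => G) with hAdef
  -- event decomposition
  have hmemE : ∀ ω, (⨆ j, ⨅ k, T j k ω) ≤ D ↔ ∀ j, ∃ k, T j k ω ≤ D := by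
    intro ω
    constructor
    · intro h j
      obtain ⟨k, hk⟩ := exists_eq_ciInf_of_finite (f := fun k => T j k ω)
      exact ⟨k, hk.trans_le ((le_ciSup (Set.Finite.bddAbove (Set.finite_range _)) j).trans h)⟩
    · intro h
      refine ciSup_le fun j => ?_
      obtain ⟨k, hk⟩ := h j
      exact (ciInf_le (Set.Finite.bddBelow (Set.finite_range _)) k).trans hk
  have hdecomp : {ω | (⨆ j, ⨅ k, T j k ω) ≤ D} = ⋃ c ∈ A, atom c := by
    ext ω
    simp only [Set.mem_setOf_eq, hmemE, Set.mem_iUnion, hatomdef, Set.mem_iInter,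
      Set.mem_preimage, hAdef, Fintype.mem_piFinset, hGdef, Finset.mem_filter,
      Finset.mem_univ, true_and]
    constructor
    · intro h
      refine ⟨fun j k => decide (T j k ω ≤ D), fun j => ?_, fun p => ?_⟩
      · obtain ⟨k, hk⟩ := h j; exact ⟨k, decide_eq_true hk⟩
      · by_cases hp : T p.1 p.2 ω ≤ D
        · simp [hSdef, hp]
        · simp [hSdef, hp, lt_of_not_ge hp]
    · rintro ⟨c, hcA, hc⟩ j
      obtain ⟨k, hk⟩ := hcA j
      refine ⟨k, ?_⟩
      have := hc (j, k)
      rw [hk] at this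
      simpa [hSdef] using this
  -- disjointness
  have hdisj : (A : Set (Fin N → Fin (r + 1) → Bool)).PairwiseDisjoint atom := by
    intro c hc c' hc' hne
    have : ∃ j k, c j k ≠ c' j k := by
      by_contra h
      push_neg at h
      exact hne (funext fun j => funext fun k => h j k)
    obtain ⟨j, k, hjk⟩ := this
    refine Set.disjoint_left.mpr fun ω hω hω' => ?_
    have h1 := Set.mem_iInter.mp hω (j, k)
    have h2 := Set.mem_iInter.mp hω' (j, k)
    rcases Bool.eq_false_or_eq_true (c j k) with h | h <;>
      rcases Bool.eq_false_or_eq_true (c' j k) with h' | h' <;>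
      rw [h] at h1 hjk <;> rw [h'] at h2 hjk
    · exact hjk rfl
    · exact absurd (Set.mem_Ioi.mp (by simpa [hSdef] using h2))
        (not_lt.mpr (Set.mem_Iic.mp (by simpa [hSdef] using h1)))
    · exact absurd (Set.mem_Ioi.mp (by simpa [hSdef] using h1))
        (not_lt.mpr (Set.mem_Iic.mp (by simpa [hSdef] using h2)))
    · exact hjk rfl
  -- compute
  have hsum : μ {ω | (⨆ j, ⨅ k, T j k ω) ≤ D} = ∑ c ∈ A, μ (atom c) := by
    rw [hdecomp, measure_biUnion_finset hdisj fun c _ => hatom_meas c]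
  rw [hsum]
  have hfactor : ∑ c ∈ A, μ (atom c) = ∏ j : Fin N, ∑ g ∈ G, ∏ k, q (g k) := by
    rw [Finset.prod_univ_sum]
    exact Finset.sum_congr rfl fun c _ => hatom_measure c
  rw [hfactor]
  -- the inner sum
  have hGsum : ∑ g ∈ G, ∏ k, q (g k) = 1 - a ^ (r + 1) := by
    have hsplit : (∑ g ∈ G, ∏ k, q (g k))
        + ∑ g ∈ Finset.univ.filter (fun g : Fin (r + 1) → Bool => ¬ ∃ k, g k = true),
            ∏ k, q (g k)
        = ∑ g : Fin (r + 1) → Bool, ∏ k, q (g k) := by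
      rw [hGdef]
      exact Finset.sum_filter_add_sum_filter_not _ _ _
    have htotal : ∑ g : Fin (r + 1) → Bool, ∏ k, q (g k) = 1 := by
      have : ∏ _k : Fin (r + 1), (∑ b : Bool, q b) = ∑ g : Fin (r + 1) → Bool, ∏ k, q (g k) := by
        rw [← Fintype.piFinset_univ, ← Finset.prod_univ_sum]
      rw [← this]
      simp only [Fintype.sum_bool, Finset.prod_const, Finset.card_univ, Fintype.card_fin]
      rw [hqsum, one_pow]
    have hbad : Finset.univ.filter (fun g : Fin (r + 1) → Bool => ¬ ∃ k, g k = true)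
        = {fun _ => false} := by
      ext g
      simp only [Finset.mem_filter, Finset.mem_univ, true_and, not_exists,
        Finset.mem_singleton]
      constructor
      · intro h; funext k; exact Bool.eq_false_iff.mpr fun hk => h k hk
      · rintro rfl k hk; exact Bool.false_ne_true hk
    have hbadval : ∑ g ∈ Finset.univ.filter
        (fun g : Fin (r + 1) → Bool => ¬ ∃ k, g k = true), ∏ k, q (g k)
        = a ^ (r + 1) := by
      rw [hbad, Finset.sum_singleton]
      simp [hqdef]
    rw [hbadval, htotal] at hsplit
    have hane : a ^ (r + 1) ≠ ⊤ := by
      rw [hadef]; exact ENNReal.pow_ne_top ENNReal.ofReal_ne_top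
    exact ENNReal.eq_sub_of_add_eq hane hsplit
  rw [hGsum, Finset.prod_const, Finset.card_univ, Fintype.card_fin]
  -- final arithmetic
  have hxp : (tmin / D) ^ (β * (r + 1 : ℝ)) = x ^ (r + 1) := by
    rw [hxdef, Real.rpow_mul (by positivity), ← Real.rpow_natCast ((tmin/D) ^ β) (r+1)]
    push_cast
    ring_nf
  rw [hxp]
  have h1 : a ^ (r + 1) = ENNReal.ofReal (x ^ (r + 1)) := by
    rw [hadef, ENNReal.ofReal_pow hx0]
  rw [h1, ← ENNReal.ofReal_one, ← ENNReal.ofReal_sub _ (by positivity),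
    ENNReal.ofReal_pow (by nlinarith [pow_le_one₀ hx0 hx1 (n := r+1), pow_nonneg hx0 (r+1)])]
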